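/- For a prime p, α > 0, integer r, t ≥ 0, and a Bruhat–Schwartz function φ on ℚ_p, let u(x,t) = (Z_r(·,t) ∗ φ)(x) for t > 0 and u(x,0)=φ(x). Then u(·,t) is itself a Bruhat–Schwartz function for every t ≥ 0, and 𝓕_{x→ξ} u(·,t) = e^{-t(max(|ξ|_p,p^r)^α - p^{rα})}·(𝓕φ)(ξ). -/

import Mathlib

open MeasureTheory Filter Topology
open scoped ENNReal NNReal

noncomputable section

variable (p : ℕ) [Fact p.Prime]

instance : MeasurableSpace ℚ_[p] := borel _
instance : BorelSpace ℚ_[p] := ⟨rfl⟩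

/-- The closed unit ball of `ℚ_[p]` (i.e. `ℤ_p`) as a positive compact set. -/
def padicUnitBall : TopologicalSpace.PositiveCompacts ℚ_[p] where
  carrier := Metric.closedBall 0 1
  isCompact' := isCompact_closedBall 0 1
  interior_nonempty' := ⟨0, mem_interior_iff_mem_nhds.2 (Metric.closedBall_mem_nhds 0 one_pos)⟩

/-- Haar measure on `ℚ_[p]` normalized so that `ℤ_p` has measure 1. -/
def μp : Measure ℚ_[p] := Measure.addHaarMeasure (padicUnitBall p)

/-- The heat kernel `Z_r(x,t) = ∫ χ(-xξ) e^{-t(⟨ξ⟩^α - p^{rα})} dξ`, where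
`⟨ξ⟩ = max(|ξ|_p, p^r)`. -/
def heatKernel (χ : AddChar ℚ_[p] ℂ) (r : ℤ) (α t : ℝ) (x : ℚ_[p]) : ℂ :=
  ∫ ξ, χ (-(x*ξ)) *
    Complex.exp (-((t * ((max ‖ξ‖ ((p:ℝ)^r)) ^ α - (p:ℝ) ^ ((r:ℝ)*α)) : ℝ) : ℂ)) ∂(μp p)

/-- The kernel `K_α(y)`, supported on the ball `|y|_p ≤ p^{-r}`. -/
def Kfun (r : ℤ) (α : ℝ) (y : ℚ_[p]) : ℝ :=
  if ‖y‖ ≤ (p:ℝ)^(-r) then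
    (1 - (p:ℝ)^α)/(1 - (p:ℝ)^(-α-1)) * ‖y‖ ^ (-α-1)
      + (p:ℝ)^((r:ℝ)*(α+1)) * (1 - (p:ℝ)^α)/(1 - (p:ℝ)^(α+1))
  else 0

/-- `u(x,t) = ∫_{|ξ|_p ≤ 1} χ(-xξ) e^{-t(⟨ξ⟩^α - p^{rα})} dξ`, the solution with initial
datum the indicator of the unit ball. -/
def uball (χ : AddChar ℚ_[p] ℂ) (r : ℤ) (α t : ℝ) (x : ℚ_[p]) : ℂ :=
  ∫ ξ in {ξ : ℚ_[p] | ‖ξ‖ ≤ 1}, χ (-(x*ξ)) *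
    Complex.exp (-((t * ((max ‖ξ‖ ((p:ℝ)^r)) ^ α - (p:ℝ) ^ ((r:ℝ)*α)) : ℝ) : ℂ)) ∂(μp p)

/-- The survival probability `S(t) = ∫_{|x|_p ≤ 1} u(x,t) dx`. -/
def Sfun (χ : AddChar ℚ_[p] ℂ) (r : ℤ) (α t : ℝ) : ℂ :=
  ∫ x in {x : ℚ_[p] | ‖x‖ ≤ 1}, uball p χ r α t x ∂(μp p)

/-- The solution `u(x,t) = (Z_r(·,t) ∗ φ)(x)` of the Cauchy problem, with `u(x,0) = φ(x)`. -/
def sol (χ : AddChar ℚ_[p] ℂ) (r : ℤ) (α : ℝ) (φ : ℚ_[p] → ℂ) (t : ℝ) (x : ℚ_[p]) : ℂ :=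
  if t = 0 then φ x else ∫ y, heatKernel p χ r α t (x-y) * φ y ∂(μp p)

/-- The pseudodifferential operator `H^α` with symbol `⟨ξ⟩^α - p^{rα}`:
`H^α g = 𝓕⁻¹[(⟨ξ⟩^α - p^{rα}) 𝓕g]`. -/
def Hop (χ : AddChar ℚ_[p] ℂ) (r : ℤ) (α : ℝ) (g : ℚ_[p] → ℂ) (x : ℚ_[p]) : ℂ :=
  ∫ ξ, χ (-(x*ξ)) * (((max ‖ξ‖ ((p:ℝ)^r)) ^ α - (p:ℝ)^((r:ℝ)*α) : ℝ) : ℂ) *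
    (∫ y, χ (ξ*y) * g y ∂(μp p)) ∂(μp p)

/-- The Laplace transform `G_r(s)` of the density `g(t)`. -/
def Gr (χ : AddChar ℚ_[p] ℂ) (r : ℤ) (α : ℝ) (s : ℝ) : ℂ :=
  ∫ y in {y : ℚ_[p] | 1 < ‖y‖ ∧ ‖y‖ ≤ (p:ℝ)^(-r)}, (Kfun p r α y : ℂ) *
    ∫ ξ in {ξ : ℚ_[p] | ‖ξ‖ ≤ 1},
      χ (-(ξ*y)) / ((s:ℂ) + (((max ‖ξ‖ ((p:ℝ)^r)) ^ α - (p:ℝ)^((r:ℝ)*α) : ℝ) : ℂ)) ∂(μp p) ∂(μp p)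

instance : (μp p).IsAddHaarMeasure := Measure.isAddHaarMeasure_addHaarMeasure _

def Bp (n : ℤ) : Set ℚ_[p] := {x : ℚ_[p] | ‖x‖ ≤ (p:ℝ)^n}

lemma hp1 : (1:ℝ) < (p:ℝ) := by exact_mod_cast (Fact.out : p.Prime).one_lt
lemma hp0 : (0:ℝ) < (p:ℝ) := lt_trans one_pos (hp1 p)

lemma Bp_meas (n : ℤ) : MeasurableSet (Bp p n) := by
  have : Bp p n = Metric.closedBall 0 ((p:ℝ)^n) := by
    ext x; simp [Bp, Metric.mem_closedBall, dist_zero_right]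
  rw [this]; exact measurableSet_closedBall

lemma vol_step (n : ℤ) : μp p (Bp p (n+1)) = p * μp p (Bp p n) := by
  classical
  set c : ℕ → ℚ_[p] := fun j => (j:ℚ_[p]) * (p:ℚ_[p])^(-(n+1)) with hc
  have hpc : ((p:ℚ_[p]) ≠ 0) := by
    exact_mod_cast (Nat.cast_ne_zero (R := ℚ_[p])).2 (Fact.out : p.Prime).ne_zero
  have hzadd : ∀ a b : ℤ, (p:ℝ)^a * (p:ℝ)^b = (p:ℝ)^(a+b) := fun a b => (zpow_add₀ (ne_of_gt (hp0 p)) a b).symm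
  have hcover : Bp p (n+1) = ⋃ j ∈ Finset.range p, (fun x => x + (-(c j)))⁻¹' (Bp p n) := by
    ext x
    simp only [Set.mem_iUnion, Finset.mem_range, Set.mem_preimage]
    constructor
    · intro hx
      have hx' : ‖x‖ ≤ (p:ℝ)^(n+1) := hx
      have hz : ‖x * (p:ℚ_[p])^(n+1)‖ ≤ 1 := by
        rw [norm_mul, Padic.norm_p_zpow]
        refine (mul_le_mul_of_nonneg_right hx' (le_of_lt (zpow_pos (hp0 p) _))).trans
          (le_of_eq ?_)
        rw [hzadd, ← zpow_zero (p:ℝ)]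
        congr 1
        ring
      set w : ℤ_[p] := ⟨x * (p:ℚ_[p])^(n+1), hz⟩ with hw
      refine ⟨w.appr 1, by simpa using w.appr_lt 1, ?_⟩
      have hspec : ‖w - (w.appr 1 : ℤ_[p])‖ ≤ (p:ℝ)^(-(1:ℕ):ℤ) :=
        (PadicInt.norm_le_pow_iff_mem_span_pow _ 1).2 (w.appr_spec 1)
      have hone : (p:ℚ_[p])^(n+1) * (p:ℚ_[p])^(-(n+1)) = 1 := by
        rw [← zpow_add₀ hpc, ← zpow_zero (p:ℚ_[p])]; congr 1; ring
      have hwx : (w : ℚ_[p]) = x * (p:ℚ_[p])^(n+1) := rfl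
      have hkey : x + -(c (w.appr 1)) = ((w : ℚ_[p]) - (w.appr 1 : ℚ_[p])) * (p:ℚ_[p])^(-(n+1)) := by
        rw [hwx, sub_mul, mul_assoc, hone, mul_one]; simp only [hc]; ring
      have hnw : ‖(w : ℚ_[p]) - (w.appr 1 : ℚ_[p])‖ ≤ (p:ℝ)^(-1:ℤ) := by
        have h := hspec
        rw [PadicInt.norm_def] at h
        push_cast at h
        simpa using h
      show ‖x + -(c (w.appr 1))‖ ≤ (p:ℝ)^n
      rw [hkey, norm_mul, Padic.norm_p_zpow, neg_neg]
      calc ‖(w:ℚ_[p]) - (w.appr 1:ℚ_[p])‖ * (p:ℝ)^(n+1)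
          ≤ (p:ℝ)^(-1:ℤ) * (p:ℝ)^(n+1) :=
            mul_le_mul_of_nonneg_right hnw (le_of_lt (zpow_pos (hp0 p) _))
        _ = (p:ℝ)^n := by rw [hzadd, show (-1:ℤ) + (n+1) = n by ring]
    · rintro ⟨j, hj, hxj⟩
      have h1 : ‖x + -(c j)‖ ≤ (p:ℝ)^n := hxj
      have h2 : ‖c j‖ ≤ (p:ℝ)^(n+1) := by
        rw [hc]; simp only []
        rw [norm_mul, Padic.norm_p_zpow, neg_neg]
        have hj1 : ‖((j:ℤ):ℚ_[p])‖ ≤ 1 := Padic.norm_int_le_one _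
        push_cast at hj1
        calc ‖(j:ℚ_[p])‖ * (p:ℝ)^(n+1) ≤ 1 * (p:ℝ)^(n+1) :=
              mul_le_mul_of_nonneg_right hj1 (le_of_lt (zpow_pos (hp0 p) _))
          _ = (p:ℝ)^(n+1) := one_mul _
      show ‖x‖ ≤ (p:ℝ)^(n+1)
      calc ‖x‖ = ‖(x + -(c j)) + c j‖ := by ring_nf
        _ ≤ max ‖x + -(c j)‖ ‖c j‖ := Padic.nonarchimedean _ _
        _ ≤ (p:ℝ)^(n+1) := max_le (h1.trans (zpow_le_zpow_right₀ (le_of_lt (hp1 p)) (by omega))) h2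
  have hdisj : (↑(Finset.range p) : Set ℕ).Pairwise
      (Function.onFun Disjoint fun j => (fun x => x + (-(c j)))⁻¹' (Bp p n)) := by
    intro i hi j hj hij
    simp only [Finset.coe_range, Set.mem_Iio] at hi hj
    rw [Function.onFun, Set.disjoint_left]
    rintro x hxi hxj
    have h1 : ‖x + -(c i)‖ ≤ (p:ℝ)^n := hxi
    have h2 : ‖x + -(c j)‖ ≤ (p:ℝ)^n := hxj
    have hne : ¬ (p:ℤ) ∣ ((i:ℤ) - (j:ℤ)) := by
      intro hdvd
      have habs : |((i:ℤ) - (j:ℤ))| < (p:ℤ) := abs_sub_lt_iff.2 ⟨by omega, by omega⟩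
      have := Int.eq_zero_of_abs_lt_dvd hdvd habs
      omega
    have hnormij : ‖(((i:ℤ) - (j:ℤ) : ℤ) : ℚ_[p])‖ = 1 := by
      have hle := Padic.norm_int_le_one (p := p) ((i:ℤ) - (j:ℤ))
      have hlt := (Padic.norm_intCast_lt_one_iff (p := p) (k := (i:ℤ) - (j:ℤ))).not.2 hne
      push_neg at hlt
      exact le_antisymm hle hlt
    have hcicj : ‖c i - c j‖ = (p:ℝ)^(n+1) := by
      have hval : c i - c j = ((i:ℚ_[p]) - (j:ℚ_[p])) * (p:ℚ_[p])^(-(n+1)) := by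
        simp only [hc]; ring
      rw [hval, norm_mul, Padic.norm_p_zpow, neg_neg]
      have hcast : ((i:ℚ_[p]) - (j:ℚ_[p])) = (((i:ℤ) - (j:ℤ) : ℤ) : ℚ_[p]) := by push_cast; ring
      rw [hcast, hnormij, one_mul]
    have hcontra : ‖c i - c j‖ ≤ (p:ℝ)^n := by
      have : c i - c j = -(x + -(c i)) + (x + -(c j)) := by ring
      rw [this]
      calc ‖-(x + -(c i)) + (x + -(c j))‖ ≤ max ‖-(x + -(c i))‖ ‖x + -(c j)‖ :=
            Padic.nonarchimedean _ _
        _ ≤ (p:ℝ)^n := by rw [norm_neg]; exact max_le h1 h2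
    rw [hcicj] at hcontra
    have : (p:ℝ)^n < (p:ℝ)^(n+1) := zpow_lt_zpow_right₀ (hp1 p) (by omega)
    linarith
  rw [hcover, measure_biUnion_finset hdisj (fun j _ => (Bp_meas p n).preimage (measurable_add_const _))]
  have hco : ∀ j : ℕ, μp p ((fun x => x + (-(c j)))⁻¹' (Bp p n)) = μp p (Bp p n) := fun j =>
    measure_preimage_add_right (μp p) _ _
  simp only [hco, Finset.sum_const, Finset.card_range, nsmul_eq_mul]

lemma vol_zero : μp p (Bp p 0) = 1 := by
  have h : Bp p 0 = Metric.closedBall 0 1 := by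
    ext x; simp [Bp, dist_zero_right]
  rw [h]
  exact Measure.addHaarMeasure_self

lemma hptop : ((p:ℝ≥0∞)) ≠ ⊤ := ENNReal.natCast_ne_top p
lemma hpzero : ((p:ℝ≥0∞)) ≠ 0 := by
  exact_mod_cast Nat.cast_ne_zero.2 (Fact.out : p.Prime).ne_zero

lemma vol_ball (n : ℤ) : μp p (Bp p n) = ENNReal.ofReal ((p:ℝ)^n) := by
  have hco : (p:ℝ≥0∞) = ENNReal.ofReal (p:ℝ) := (ENNReal.ofReal_natCast p).symm
  have hmul : ∀ m : ℤ, (p:ℝ≥0∞) * ENNReal.ofReal ((p:ℝ)^m) = ENNReal.ofReal ((p:ℝ)^(m+1)) := by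
    intro m
    rw [hco, ← ENNReal.ofReal_mul (le_of_lt (hp0 p))]
    congr 1
    rw [zpow_add_one₀ (ne_of_gt (hp0 p)), mul_comm]
  induction n using Int.induction_on with
  | zero => simpa using vol_zero p
  | succ k ih =>
      rw [vol_step, ih, hmul]
  | pred k ih =>
      have h := vol_step p (-(k:ℤ)-1)
      rw [show (-(k:ℤ)-1+1) = -k by ring] at h
      rw [ih] at h
      have h2 : (p:ℝ≥0∞) * μp p (Bp p (-(k:ℤ)-1)) = (p:ℝ≥0∞) * ENNReal.ofReal ((p:ℝ)^(-(k:ℤ)-1)) := by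
        rw [← h, hmul, show (-(k:ℤ)-1+1) = -k by ring]
      have h3 := (ENNReal.mul_right_inj (hpzero p) (hptop p)).1 h2
      exact h3

lemma vol_ball_ne_top (n : ℤ) : μp p (Bp p n) ≠ ⊤ := by
  rw [vol_ball]; exact ENNReal.ofReal_ne_top

lemma vol_ball_toReal (n : ℤ) : (μp p (Bp p n)).toReal = (p:ℝ)^n := by
  rw [vol_ball, ENNReal.toReal_ofReal (le_of_lt (zpow_pos (hp0 p) n))]

lemma char_eq_of_near (χ : AddChar ℚ_[p] ℂ) (hχ : ∀ y : ℚ_[p], χ y = 1 ↔ ‖y‖ ≤ 1) :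
    ∀ x y : ℚ_[p], ‖x - y‖ ≤ 1 → χ x = χ y := by
  intro x y h
  have h1 : χ (x - y) = 1 := (hχ _).2 h
  have h2 : χ x = χ (x - y) * χ y := by
    rw [← AddChar.map_add_eq_mul, sub_add_cancel]
  rw [h2, h1, one_mul]

lemma char_continuous (χ : AddChar ℚ_[p] ℂ) (hχ : ∀ y : ℚ_[p], χ y = 1 ↔ ‖y‖ ≤ 1) :
    Continuous χ := by
  rw [continuous_iff_continuousAt]
  intro x
  have h : ∀ᶠ y in 𝓝 x, χ y = χ x := by
    filter_upwards [Metric.closedBall_mem_nhds x one_pos] with y hy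
    exact char_eq_of_near p χ hχ y x (by simpa [dist_eq_norm] using hy)
  exact (continuousAt_const (y := χ x)).congr (h.mono fun y hy => hy.symm)

lemma char_norm_one (χ : AddChar ℚ_[p] ℂ) (hχ : ∀ y : ℚ_[p], χ y = 1 ↔ ‖y‖ ≤ 1)
    (y : ℚ_[p]) : ‖χ y‖ = 1 := by
  obtain ⟨k, hk⟩ := pow_unbounded_of_one_lt ‖y‖ (hp1 p)
  have hsm : ((p:ℚ_[p]))^k * y = (p^k : ℕ) • y := by
    rw [nsmul_eq_mul]
    push_cast
    ring
  have h1 : χ (((p:ℚ_[p]))^k * y) = 1 := by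
    apply (hχ _).2
    rw [norm_mul, Padic.norm_p_pow]
    calc (p:ℝ)^(-(k:ℤ)) * ‖y‖ ≤ (p:ℝ)^(-(k:ℤ)) * (p:ℝ)^(k:ℤ) := by
          apply mul_le_mul_of_nonneg_left _ (le_of_lt (zpow_pos (hp0 p) _))
          exact_mod_cast hk.le
      _ = 1 := by
          rw [← zpow_add₀ (ne_of_gt (hp0 p)), ← zpow_zero (p:ℝ)]
          congr 1
          ring
  rw [hsm, AddChar.map_nsmul_eq_pow] at h1
  have h2 : ‖χ y‖ ^ (p^k) = 1 := by
    rw [← norm_pow, h1, norm_one]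
  have hnn : (0:ℝ) ≤ ‖χ y‖ := norm_nonneg _
  have hne : p^k ≠ 0 := pow_ne_zero _ (Fact.out : p.Prime).ne_zero
  rcases lt_trichotomy ‖χ y‖ 1 with h | h | h
  · have := pow_lt_one₀ hnn h hne
    rw [h2] at this; exact absurd this (lt_irrefl _)
  · exact h
  · have := one_lt_pow₀ h hne
    rw [h2] at this; exact absurd this (lt_irrefl _)

lemma mem_Bp_add {n : ℤ} {ξ η : ℚ_[p]} (hη : ‖η‖ ≤ (p:ℝ)^n) (hξ : ξ ∈ Bp p n) :
    ξ + η ∈ Bp p n := by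
  have h : ‖ξ + η‖ ≤ max ‖ξ‖ ‖η‖ := Padic.nonarchimedean _ _
  exact le_trans h (max_le hξ hη)

lemma setIntegral_Bp_add (n : ℤ) {η : ℚ_[p]} (hη : ‖η‖ ≤ (p:ℝ)^n) (f : ℚ_[p] → ℂ) :
    ∫ ξ in Bp p n, f (ξ + η) ∂(μp p) = ∫ ξ in Bp p n, f ξ ∂(μp p) := by
  have hset : ∀ ξ : ℚ_[p], ξ + η ∈ Bp p n ↔ ξ ∈ Bp p n := by
    intro ξ
    constructor
    · intro h
      have h2 := mem_Bp_add p (η := -η) (by simpa using hη) h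
      simpa using h2
    · exact mem_Bp_add p hη
  rw [← integral_indicator (Bp_meas p n), ← integral_indicator (Bp_meas p n)]
  rw [← integral_add_right_eq_self (fun ξ => (Bp p n).indicator f ξ) η]
  congr 1
  ext ξ
  by_cases h : ξ ∈ Bp p n
  · rw [Set.indicator_of_mem h, Set.indicator_of_mem ((hset ξ).2 h)]
  · rw [Set.indicator_of_notMem h, Set.indicator_of_notMem (fun hc => h ((hset ξ).1 hc))]

lemma char_ball_int (χ : AddChar ℚ_[p] ℂ) (hχ : ∀ y : ℚ_[p], χ y = 1 ↔ ‖y‖ ≤ 1)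
    (n : ℤ) (x : ℚ_[p]) :
    ∫ ξ in Bp p n, (χ (x*ξ) : ℂ) ∂(μp p)
      = if ‖x‖ ≤ (p:ℝ)^(-n) then (((p:ℝ)^n : ℝ) : ℂ) else 0 := by
  split_ifs with hx
  · have hcongr : Set.EqOn (fun ξ : ℚ_[p] => (χ (x*ξ) : ℂ)) (fun _ => (1:ℂ)) (Bp p n) := by
      intro ξ hξ
      show (χ (x*ξ) : ℂ) = 1
      apply (hχ _).2
      rw [norm_mul]
      calc ‖x‖ * ‖ξ‖ ≤ (p:ℝ)^(-n) * (p:ℝ)^n :=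
            mul_le_mul hx hξ (norm_nonneg _) (le_of_lt (zpow_pos (hp0 p) _))
        _ = 1 := by
            rw [← zpow_add₀ (ne_of_gt (hp0 p)), ← zpow_zero (p:ℝ)]; congr 1; ring
    rw [setIntegral_congr_fun (Bp_meas p n) hcongr, setIntegral_const, measureReal_def, vol_ball_toReal]
    simp [Complex.real_smul]
  · push_neg at hx
    set η : ℚ_[p] := (p:ℚ_[p])^(-n) with hηdef
    set I := ∫ ξ in Bp p n, (χ (x*ξ) : ℂ) ∂(μp p) with hI
    have hη : ‖η‖ ≤ (p:ℝ)^n := by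
      rw [hηdef, Padic.norm_p_zpow, neg_neg]
    have htrans := setIntegral_Bp_add p n hη (fun ξ => (χ (x*ξ) : ℂ))
    have hsplit : ∀ ξ : ℚ_[p], (χ (x*(ξ + η)) : ℂ) = χ (x*ξ) * χ (x*η) := by
      intro ξ
      rw [← AddChar.map_add_eq_mul]
      congr 1
      ring
  
    have heq : I * χ (x*η) = I := by
      rw [hI, ← integral_mul_const, ← htrans]
      congr 1
      funext ξ
      exact (hsplit ξ).symm
    have hne : (χ (x*η) : ℂ) ≠ 1 := by
      intro hc
      have h1 := (hχ _).1 hc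
      rw [norm_mul, hηdef, Padic.norm_p_zpow, neg_neg] at h1
      have h2 : (1:ℝ) < ‖x‖ * (p:ℝ)^n := by
        calc (1:ℝ) = (p:ℝ)^(-n) * (p:ℝ)^n := by
              rw [← zpow_add₀ (ne_of_gt (hp0 p)), ← zpow_zero (p:ℝ)]; congr 1; ring
          _ < ‖x‖ * (p:ℝ)^n := mul_lt_mul_of_pos_right hx (zpow_pos (hp0 p) _)
      linarith
    have hzero : I * (χ (x*η) - 1) = 0 := by
      rw [mul_sub, heq, mul_one, sub_self]
    rcases mul_eq_zero.1 hzero with h | h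
    · exact h
    · exact absurd (sub_eq_zero.1 h) hne

/-- real version of the symbol exponential -/
def psiR (r : ℤ) (α t : ℝ) (ξ : ℚ_[p]) : ℝ :=
  Real.exp (-(t * ((max ‖ξ‖ ((p:ℝ)^r)) ^ α - (p:ℝ) ^ ((r:ℝ)*α))))

def psiC (r : ℤ) (α t : ℝ) (ξ : ℚ_[p]) : ℂ :=
  Complex.exp (-((t * ((max ‖ξ‖ ((p:ℝ)^r)) ^ α - (p:ℝ) ^ ((r:ℝ)*α)) : ℝ) : ℂ))

lemma psiC_eq (r : ℤ) (α t : ℝ) (ξ : ℚ_[p]) : psiC p r α t ξ = ((psiR p r α t ξ : ℝ) : ℂ) := by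
  rw [psiC, psiR, Complex.ofReal_exp]
  norm_num

lemma Ppow (r : ℤ) (α : ℝ) : (p:ℝ) ^ ((r:ℝ)*α) = ((p:ℝ)^(r:ℤ)) ^ α := by
  rw [Real.rpow_mul (le_of_lt (hp0 p)), Real.rpow_intCast]

lemma max_pos (r : ℤ) (ξ : ℚ_[p]) : 0 < max ‖ξ‖ ((p:ℝ)^r) :=
  lt_max_of_lt_right (zpow_pos (hp0 p) r)

lemma symbol_nonneg {r : ℤ} {α : ℝ} (hα : 0 < α) (ξ : ℚ_[p]) :
    0 ≤ (max ‖ξ‖ ((p:ℝ)^r)) ^ α - (p:ℝ) ^ ((r:ℝ)*α) := by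
  rw [Ppow, sub_nonneg]
  exact Real.rpow_le_rpow (le_of_lt (zpow_pos (hp0 p) r)) (le_max_right _ _) (le_of_lt hα)

lemma psiR_pos (r : ℤ) (α t : ℝ) (ξ : ℚ_[p]) : 0 < psiR p r α t ξ := Real.exp_pos _

lemma psiR_le_one {r : ℤ} {α t : ℝ} (hα : 0 < α) (ht : 0 ≤ t) (ξ : ℚ_[p]) :
    psiR p r α t ξ ≤ 1 := by
  rw [psiR, Real.exp_le_one_iff, neg_nonpos]
  exact mul_nonneg ht (symbol_nonneg p hα ξ)

lemma psiR_continuous (r : ℤ) (α t : ℝ) : Continuous (psiR p r α t) := by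
  apply Real.continuous_exp.comp
  apply Continuous.neg
  apply Continuous.mul continuous_const
  apply Continuous.sub _ continuous_const
  apply Continuous.rpow_const (Continuous.max continuous_norm continuous_const)
  intro ξ
  exact Or.inl (ne_of_gt (max_pos p r ξ))

lemma psiC_continuous (r : ℤ) (α t : ℝ) : Continuous (psiC p r α t) := by
  have h : psiC p r α t = fun ξ => ((psiR p r α t ξ : ℝ) : ℂ) := funext (psiC_eq p r α t)
  rw [h]
  exact Complex.continuous_ofReal.comp (psiR_continuous p r α t)

lemma psiR_locConst {r : ℤ} {α t : ℝ} {ξ w : ℚ_[p]} (h : ‖w - ξ‖ ≤ (p:ℝ)^r) :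
    psiR p r α t w = psiR p r α t ξ := by
  have hmax : max ‖w‖ ((p:ℝ)^r) = max ‖ξ‖ ((p:ℝ)^r) := by
    rcases le_or_gt ‖ξ‖ ((p:ℝ)^r) with hle | hlt
    · have hw : ‖w‖ ≤ (p:ℝ)^r := by
        have : ‖w‖ ≤ max ‖w - ξ‖ ‖ξ‖ := by
          calc ‖w‖ = ‖(w - ξ) + ξ‖ := by ring_nf
            _ ≤ max ‖w - ξ‖ ‖ξ‖ := Padic.nonarchimedean _ _
        exact le_trans this (max_le h hle)
      rw [max_eq_right hw, max_eq_right hle]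
    · have hw : ‖w‖ = ‖ξ‖ := by
        have h1 : ‖w - ξ‖ < ‖ξ‖ := lt_of_le_of_lt h hlt
        have h2 : ‖w‖ ≤ ‖ξ‖ := by
          calc ‖w‖ = ‖(w - ξ) + ξ‖ := by ring_nf
            _ ≤ max ‖w - ξ‖ ‖ξ‖ := Padic.nonarchimedean _ _
            _ = ‖ξ‖ := max_eq_right h1.le
        have h4 : ‖ξ - w‖ = ‖w - ξ‖ := by rw [← norm_neg]; ring_nf
        have h3 : ‖ξ‖ ≤ max ‖ξ - w‖ ‖w‖ := by
          calc ‖ξ‖ = ‖(ξ - w) + w‖ := by ring_nf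
            _ ≤ max ‖ξ - w‖ ‖w‖ := Padic.nonarchimedean _ _
        rcases max_cases ‖ξ - w‖ ‖w‖ with ⟨he, _⟩ | ⟨he, _⟩
        · rw [he, h4] at h3; linarith
        · rw [he] at h3; linarith
      rw [hw]
  rw [psiR, psiR, hmax]

lemma psiC_locConst {r : ℤ} {α t : ℝ} {ξ w : ℚ_[p]} (h : ‖w - ξ‖ ≤ (p:ℝ)^r) :
    psiC p r α t w = psiC p r α t ξ := by
  rw [psiC_eq, psiC_eq, psiR_locConst p h]

lemma summable_bnd {r : ℤ} {α t : ℝ} (hα : 0 < α) (ht : 0 < t) :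
    Summable (fun k : ℕ => (p:ℝ)^(r + (k:ℤ) + 1) *
      Real.exp (-(t * (((p:ℝ)^(r + (k:ℤ)))^α - (p:ℝ)^((r:ℝ)*α))))) := by
  set P : ℝ := (p:ℝ)^((r:ℝ)*α) with hP
  set q : ℝ := (p:ℝ)^α with hq
  set E : ℕ → ℝ := fun k => ((p:ℝ)^(r + (k:ℤ)))^α with hE
  set f : ℕ → ℝ := fun k => (p:ℝ)^(r + (k:ℤ) + 1) * Real.exp (-(t * (E k - P))) with hf
  have hppos := hp0 p
  have hq1 : 1 < q := by
    rw [hq]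
    exact Real.one_lt_rpow_iff_of_pos hppos |>.2 (Or.inl ⟨hp1 p, hα⟩)
  have hEpos : ∀ k, 0 < E k := fun k => Real.rpow_pos_of_pos (zpow_pos hppos _) _
  have hEsucc : ∀ k : ℕ, E (k+1) = q * E k := by
    intro k
    rw [hE]
    simp only []
    push_cast
    rw [show r + ((k:ℤ)+1) = (r + (k:ℤ)) + 1 by ring]
    rw [zpow_add_one₀ (ne_of_gt hppos)]
    rw [Real.mul_rpow (le_of_lt (zpow_pos hppos _)) (le_of_lt hppos)]
    rw [mul_comm, hq]
  have hkey : ∀ k : ℕ, f (k+1) = (p * Real.exp (-(t * ((q-1) * E k)))) * f k := by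
    intro k
    rw [hf]
    simp only []
    push_cast
    rw [show r + ((k:ℤ)+1) + 1 = (r + (k:ℤ) + 1) + 1 by ring]
    rw [zpow_add_one₀ (ne_of_gt hppos)]
    have hexp : -(t * (E (k+1) - P)) = -(t * ((q-1) * E k)) + -(t * (E k - P)) := by
      rw [hEsucc k]; ring
    rw [hexp, Real.exp_add]
    ring
  have hEtop : Tendsto E atTop atTop := by
    have h1 : Tendsto (fun k : ℕ => (p:ℝ)^(r + (k:ℤ))) atTop atTop := by
      have h2 : ∀ k : ℕ, (p:ℝ)^(r + (k:ℤ)) = (p:ℝ)^(r:ℤ) * (p:ℝ)^(k:ℕ) := by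
        intro k
        rw [← zpow_natCast (p:ℝ) k, ← zpow_add₀ (ne_of_gt hppos)]
      simp only [h2]
      exact (tendsto_pow_atTop_atTop_of_one_lt (hp1 p)).const_mul_atTop (zpow_pos hppos r)
    exact (tendsto_rpow_atTop hα).comp h1
  have hratio : Tendsto (fun k : ℕ => p * Real.exp (-(t * ((q-1) * E k)))) atTop (𝓝 0) := by
    have h1 : Tendsto (fun k : ℕ => t * ((q-1) * E k)) atTop atTop := by
      apply Tendsto.const_mul_atTop ht
      exact Tendsto.const_mul_atTop (by linarith) hEtop
    have h2 : Tendsto (fun k : ℕ => Real.exp (-(t * ((q-1) * E k)))) atTop (𝓝 0) := by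
      exact Real.tendsto_exp_neg_atTop_nhds_zero.comp h1
    have := h2.const_mul (p:ℝ)
    simpa using this
  have hev : ∀ᶠ k in atTop, p * Real.exp (-(t * ((q-1) * E k))) ≤ 1/2 := by
    exact hratio.eventually_le_const (show (0:ℝ) < 1/2 by norm_num)
  apply summable_of_ratio_norm_eventually_le (show (1:ℝ)/2 < 1 by norm_num)
  filter_upwards [hev] with k hk
  rw [hkey k]
  have hfpos : 0 < f k := mul_pos (zpow_pos hppos _) (Real.exp_pos _)
  rw [norm_mul, Real.norm_of_nonneg (by positivity), Real.norm_of_nonneg hfpos.le]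
  exact mul_le_mul_of_nonneg_right hk hfpos.le

lemma integrable_psiR {r : ℤ} {α t : ℝ} (hα : 0 < α) (ht : 0 < t) :
    Integrable (psiR p r α t) (μp p) := by
  have hppos := hp0 p
  set P : ℝ := (p:ℝ)^((r:ℝ)*α) with hP
  set S : ℕ → Set ℚ_[p] := fun k =>
    Nat.rec (Bp p r) (fun j _ => {ξ : ℚ_[p] | (p:ℝ)^(r + (j:ℤ)) < ‖ξ‖ ∧ ‖ξ‖ ≤ (p:ℝ)^(r + (j:ℤ) + 1)}) k
    with hS
  have hS0 : S 0 = Bp p r := rfl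
  have hSsucc : ∀ k : ℕ, S (k+1) = {ξ : ℚ_[p] | (p:ℝ)^(r + (k:ℤ)) < ‖ξ‖ ∧ ‖ξ‖ ≤ (p:ℝ)^(r + (k:ℤ) + 1)} := fun k => rfl
  have hSm : ∀ k, MeasurableSet (S k) := by
    intro k
    cases k with
    | zero => exact Bp_meas p r
    | succ j =>
        rw [hSsucc]
        apply MeasurableSet.inter
        · exact measurableSet_lt measurable_const (measurable_norm)
        · exact measurableSet_le (measurable_norm) measurable_const
  have hcover : (Set.univ : Set ℚ_[p]) ⊆ ⋃ k, S k := by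
    intro ξ _
    have hex : ∃ k : ℕ, ‖ξ‖ ≤ (p:ℝ)^(r + (k:ℤ)) := by
      obtain ⟨m, hm⟩ := pow_unbounded_of_one_lt ‖ξ‖ (hp1 p)
      refine ⟨(m - r).toNat, ?_⟩
      have h1 : (m:ℤ) ≤ r + ((m - r).toNat : ℤ) := by omega
      calc ‖ξ‖ ≤ (p:ℝ)^(m:ℤ) := by
            rw [zpow_natCast]; exact hm.le
        _ ≤ (p:ℝ)^(r + ((m - r).toNat:ℤ)) := zpow_le_zpow_right₀ (le_of_lt (hp1 p)) h1
    classical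
    set k0 := Nat.find hex with hk0
    have hle : ‖ξ‖ ≤ (p:ℝ)^(r + (k0:ℤ)) := Nat.find_spec hex
    cases hk : k0 with
    | zero =>
        apply Set.mem_iUnion.2 ⟨0, ?_⟩
        rw [hS0]
        show ‖ξ‖ ≤ (p:ℝ)^r
        rw [hk] at hle
        simpa using hle
    | succ j =>
        apply Set.mem_iUnion.2 ⟨j+1, ?_⟩
        rw [hSsucc]
        constructor
        · by_contra hcon
          push_neg at hcon
          have := Nat.find_min hex (by omega : j < k0) 
          exact this hcon
        · rw [hk] at hle
          calc ‖ξ‖ ≤ (p:ℝ)^(r + ((j:ℤ)+1)) := by push_cast at hle ⊢; exact hle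
            _ = (p:ℝ)^(r + (j:ℤ) + 1) := by ring_nf
  refine ⟨(psiR_continuous p r α t).aestronglyMeasurable, ?_⟩
  rw [hasFiniteIntegral_iff_norm]
  set b : ℕ → ℝ := fun k =>
    Nat.rec ((p:ℝ)^r) (fun j _ => (p:ℝ)^(r + (j:ℤ) + 1) *
      Real.exp (-(t * (((p:ℝ)^(r + (j:ℤ)))^α - P)))) k with hb
  have hb0 : b 0 = (p:ℝ)^r := rfl
  have hbsucc : ∀ k : ℕ, b (k+1) = (p:ℝ)^(r + (k:ℤ) + 1) *
      Real.exp (-(t * (((p:ℝ)^(r + (k:ℤ)))^α - P))) := fun k => rfl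
  have hbnn : ∀ k, 0 ≤ b k := by
    intro k
    cases k with
    | zero => exact le_of_lt (zpow_pos hppos r)
    | succ j => exact le_of_lt (mul_pos (zpow_pos hppos _) (Real.exp_pos _))
  have hbsum : Summable b := by
    rw [← summable_nat_add_iff 1]
    simp only [hbsucc]
    exact summable_bnd p hα ht
  have hpiece : ∀ k : ℕ, ∫⁻ ξ in S k, ENNReal.ofReal ‖psiR p r α t ξ‖ ∂(μp p)
      ≤ ENNReal.ofReal (b k) := by
    intro k
    cases k with
    | zero =>
        calc ∫⁻ ξ in S 0, ENNReal.ofReal ‖psiR p r α t ξ‖ ∂(μp p)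
            ≤ ∫⁻ _ in S 0, 1 ∂(μp p) := by
              apply lintegral_mono
              intro ξ
              show ENNReal.ofReal ‖psiR p r α t ξ‖ ≤ 1
              rw [Real.norm_of_nonneg (psiR_pos p r α t ξ).le]
              exact ENNReal.ofReal_le_one.2 (psiR_le_one p hα ht.le ξ)
          _ = μp p (Bp p r) := by rw [lintegral_one, Measure.restrict_apply_univ, hS0]
          _ = ENNReal.ofReal (b 0) := by rw [vol_ball, hb0]
    | succ j =>
        have hbound : ∀ ξ ∈ S (j+1), ENNReal.ofReal ‖psiR p r α t ξ‖
            ≤ ENNReal.ofReal (Real.exp (-(t * (((p:ℝ)^(r + (j:ℤ)))^α - P)))) := by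
          intro ξ hξ
          rw [hSsucc] at hξ
          rw [Real.norm_of_nonneg (psiR_pos p r α t ξ).le]
          apply ENNReal.ofReal_le_ofReal
          rw [psiR]
          apply Real.exp_le_exp.2
          rw [neg_le_neg_iff]
          apply mul_le_mul_of_nonneg_left _ ht.le
          apply sub_le_sub_right
          apply Real.rpow_le_rpow (le_of_lt (zpow_pos hppos _)) _ hα.le
          exact le_trans hξ.1.le (le_max_left _ _)
        calc ∫⁻ ξ in S (j+1), ENNReal.ofReal ‖psiR p r α t ξ‖ ∂(μp p)
            ≤ ∫⁻ _ in S (j+1), ENNReal.ofReal (Real.exp (-(t * (((p:ℝ)^(r + (j:ℤ)))^α - P)))) ∂(μp p) := by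
              apply setLIntegral_mono measurable_const
              exact hbound
          _ = ENNReal.ofReal (Real.exp (-(t * (((p:ℝ)^(r + (j:ℤ)))^α - P)))) * μp p (S (j+1)) := by
              rw [lintegral_const, Measure.restrict_apply_univ]
          _ ≤ ENNReal.ofReal (Real.exp (-(t * (((p:ℝ)^(r + (j:ℤ)))^α - P)))) * ENNReal.ofReal ((p:ℝ)^(r + (j:ℤ) + 1)) := by
              apply mul_le_mul_right
              rw [← vol_ball]
              apply measure_mono
              intro ξ hξ
              rw [hSsucc] at hξ
              exact hξ.2
          _ = ENNReal.ofReal (b (j+1)) := by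
              rw [← ENNReal.ofReal_mul (Real.exp_pos _).le, hbsucc, mul_comm]
  calc ∫⁻ ξ, ENNReal.ofReal ‖psiR p r α t ξ‖ ∂(μp p)
      = ∫⁻ ξ in Set.univ, ENNReal.ofReal ‖psiR p r α t ξ‖ ∂(μp p) := by
        rw [Measure.restrict_univ]
    _ ≤ ∫⁻ ξ in ⋃ k, S k, ENNReal.ofReal ‖psiR p r α t ξ‖ ∂(μp p) := by
        apply lintegral_mono_set hcover
    _ ≤ ∑' k, ∫⁻ ξ in S k, ENNReal.ofReal ‖psiR p r α t ξ‖ ∂(μp p) := lintegral_iUnion_le _ _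
    _ ≤ ∑' k, ENNReal.ofReal (b k) := ENNReal.tsum_le_tsum hpiece
    _ = ENNReal.ofReal (∑' k, b k) := (ENNReal.ofReal_tsum_of_nonneg hbnn hbsum).symm
    _ < ⊤ := ENNReal.ofReal_lt_top

lemma integrable_psiC {r : ℤ} {α t : ℝ} (hα : 0 < α) (ht : 0 < t) :
    Integrable (psiC p r α t) (μp p) := by
  have h : psiC p r α t = fun ξ => ((psiR p r α t ξ : ℝ) : ℂ) := funext (psiC_eq p r α t)
  rw [h]
  exact (integrable_psiR p hα ht).ofReal

def heatKernel' (χ : AddChar ℚ_[p] ℂ) (r : ℤ) (α t : ℝ) (x : ℚ_[p]) : ℂ :=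
  ∫ ξ, χ (-(x*ξ)) * psiC p r α t ξ ∂(μp p)

lemma norm_psiC (r : ℤ) (α t : ℝ) (ξ : ℚ_[p]) : ‖psiC p r α t ξ‖ = psiR p r α t ξ := by
  rw [psiC_eq, Complex.norm_real, Real.norm_of_nonneg (psiR_pos p r α t ξ).le]

section Zlem
variable (χ : AddChar ℚ_[p] ℂ) (r : ℤ) (α t : ℝ)

lemma hK_continuous (hχ : ∀ y : ℚ_[p], χ y = 1 ↔ ‖y‖ ≤ 1) (hα : 0 < α) (ht : 0 < t) :
    Continuous (heatKernel' p χ r α t) := by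
  apply continuous_of_dominated (bound := psiR p r α t)
  · intro x
    apply Continuous.aestronglyMeasurable
    exact ((char_continuous p χ hχ).comp (by continuity)).mul (psiC_continuous p r α t)
  · intro x
    filter_upwards with ξ
    rw [norm_mul, char_norm_one p χ hχ, one_mul, norm_psiC]
  · exact integrable_psiR p hα ht
  · filter_upwards with ξ
    exact ((char_continuous p χ hχ).comp (by continuity)).mul continuous_const

lemma hK_supp (hχ : ∀ y : ℚ_[p], χ y = 1 ↔ ‖y‖ ≤ 1) {x : ℚ_[p]}
    (hx : (p:ℝ)^(-r) < ‖x‖) : heatKernel' p χ r α t x = 0 := by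
  set η : ℚ_[p] := (p:ℚ_[p])^(-r) with hη
  have hηnorm : ‖η‖ = (p:ℝ)^r := by rw [hη, Padic.norm_p_zpow, neg_neg]
  set Z := heatKernel' p χ r α t x with hZ
  have htrans : heatKernel' p χ r α t x
      = ∫ ξ, χ (-(x*(ξ + η))) * psiC p r α t (ξ + η) ∂(μp p) := by
    rw [heatKernel']
    exact (integral_add_right_eq_self (fun ξ => χ (-(x*ξ)) * psiC p r α t ξ) η).symm
  have hsplit : ∀ ξ : ℚ_[p], χ (-(x*(ξ + η))) * psiC p r α t (ξ + η)
      = χ (-(x*η)) * (χ (-(x*ξ)) * psiC p r α t ξ) := by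
    intro ξ
    have h1 : psiC p r α t (ξ + η) = psiC p r α t ξ := by
      apply psiC_locConst
      simpa [hηnorm] using le_of_eq hηnorm
    have h2 : (χ (-(x*(ξ + η))) : ℂ) = χ (-(x*ξ)) * χ (-(x*η)) := by
      rw [← AddChar.map_add_eq_mul]
      congr 1
      ring
    rw [h1, h2]
    ring
  have heq : Z = χ (-(x*η)) * Z := by
    conv_lhs => rw [hZ, htrans]
    simp only [hsplit]
    rw [integral_const_mul]
    rfl
  have hne : (χ (-(x*η)) : ℂ) ≠ 1 := by
    intro hc
    have h1 := (hχ _).1 hc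
    rw [norm_neg, norm_mul, hηnorm] at h1
    have h2 : (1:ℝ) < ‖x‖ * (p:ℝ)^r := by
      calc (1:ℝ) = (p:ℝ)^(-r) * (p:ℝ)^r := by
            rw [← zpow_add₀ (ne_of_gt (hp0 p)), ← zpow_zero (p:ℝ)]; congr 1; ring
        _ < ‖x‖ * (p:ℝ)^r := mul_lt_mul_of_pos_right hx (zpow_pos (hp0 p) _)
    linarith
  have hzero : (χ (-(x*η)) - 1) * Z = 0 := by
    rw [sub_mul, one_mul, ← heq, sub_self]
  rcases mul_eq_zero.1 hzero with h | h
  · exact absurd (sub_eq_zero.1 h) hne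
  · exact h

end Zlem

lemma FT_hK (χ : AddChar ℚ_[p] ℂ) (hχ : ∀ y : ℚ_[p], χ y = 1 ↔ ‖y‖ ≤ 1)
    {r : ℤ} {α t : ℝ} (hα : 0 < α) (ht : 0 < t) (ξ : ℚ_[p]) :
    ∫ z, χ (ξ*z) * heatKernel' p χ r α t z ∂(μp p) = psiC p r α t ξ := by
  have hcont := char_continuous p χ hχ
  set B : Set ℚ_[p] := Bp p (-r) with hB
  set F : ℚ_[p] × ℚ_[p] → ℂ := fun q => χ (ξ*q.1) * (χ (-(q.1*q.2)) * psiC p r α t q.2) with hF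
  have hFcont : Continuous F := by
    apply Continuous.mul
    · exact hcont.comp (continuous_const.mul continuous_fst)
    · apply Continuous.mul
      · exact hcont.comp ((continuous_fst.mul continuous_snd).neg)
      · exact (psiC_continuous p r α t).comp continuous_snd
  have hnormF : ∀ q : ℚ_[p] × ℚ_[p], ‖F q‖ = psiR p r α t q.2 := by
    intro q
    rw [hF]
    simp only []
    rw [norm_mul, norm_mul, char_norm_one p χ hχ, char_norm_one p χ hχ, norm_psiC]
    ring
  have hres : ∫ z, χ (ξ*z) * heatKernel' p χ r α t z ∂(μp p)
      = ∫ z in B, χ (ξ*z) * heatKernel' p χ r α t z ∂(μp p) := by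
    symm
    apply setIntegral_eq_integral_of_forall_compl_eq_zero
    intro z hz
    have hz' : (p:ℝ)^(-r) < ‖z‖ := by
      by_contra hc
      push_neg at hc
      exact hz hc
    rw [hK_supp p χ r α t hχ hz', mul_zero]
  have hμB : μp p B ≠ ⊤ := vol_ball_ne_top p (-r)
  have hInt : Integrable F (((μp p).restrict B).prod (μp p)) := by
    apply (integrable_prod_iff hFcont.aestronglyMeasurable).2
    constructor
    · filter_upwards with z
      have hzf : (fun w => F (z, w)) = fun w => χ (ξ*z) * (χ (-(z*w)) * psiC p r α t w) := rfl
      rw [hzf]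
      apply Integrable.const_mul
      apply Integrable.bdd_mul (integrable_psiC p hα ht)
        ((hcont.comp (by continuity)).aestronglyMeasurable)
      exact Filter.Eventually.of_forall (fun w => le_of_eq (char_norm_one p χ hχ _))
    · have hfun : (fun z => ∫ w, ‖F (z, w)‖ ∂(μp p))
          = fun _ => ∫ w, psiR p r α t w ∂(μp p) := by
        funext z
        congr 1
        funext w
        exact hnormF (z, w)
      rw [hfun]
      exact integrableOn_const hμB
  have hstep1 : ∫ z in B, χ (ξ*z) * heatKernel' p χ r α t z ∂(μp p)
      = ∫ z in B, ∫ w, F (z, w) ∂(μp p) ∂(μp p) := by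
    apply setIntegral_congr_fun (Bp_meas p (-r))
    intro z _
    show χ (ξ*z) * heatKernel' p χ r α t z = ∫ w, F (z, w) ∂(μp p)
    rw [heatKernel', ← integral_const_mul]
  have hswap : ∫ z in B, ∫ w, F (z, w) ∂(μp p) ∂(μp p)
      = ∫ w, ∫ z in B, F (z, w) ∂(μp p) ∂(μp p) := integral_integral_swap hInt
  set T : Set ℚ_[p] := {w : ℚ_[p] | ‖ξ - w‖ ≤ (p:ℝ)^r} with hT
  have hTmeas : MeasurableSet T := by
    have : T = (fun w => w + (-ξ)) ⁻¹' (Bp p r) := by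
      ext w
      show ‖ξ - w‖ ≤ (p:ℝ)^r ↔ ‖w + -ξ‖ ≤ (p:ℝ)^r
      rw [show w + -ξ = -(ξ - w) by ring, norm_neg]
    rw [this]
    exact (Bp_meas p r).preimage (measurable_add_const _)
  have hμT : μp p T = ENNReal.ofReal ((p:ℝ)^r) := by
    have hTeq : T = (fun w => w + (-ξ)) ⁻¹' (Bp p r) := by
      ext w
      show ‖ξ - w‖ ≤ (p:ℝ)^r ↔ ‖w + -ξ‖ ≤ (p:ℝ)^r
      rw [show w + -ξ = -(ξ - w) by ring, norm_neg]
    rw [hTeq, measure_preimage_add_right, vol_ball]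
  have hinner : ∀ w : ℚ_[p], ∫ z in B, F (z, w) ∂(μp p)
      = psiC p r α t w * (if ‖ξ - w‖ ≤ (p:ℝ)^r then (((p:ℝ)^(-r) : ℝ) : ℂ) else 0) := by
    intro w
    have hcomb : ∀ z : ℚ_[p], F (z, w) = psiC p r α t w * χ ((ξ - w)*z) := by
      intro z
      rw [hF]
      simp only []
      have : (χ ((ξ - w)*z) : ℂ) = χ (ξ*z) * χ (-(z*w)) := by
        rw [← AddChar.map_add_eq_mul]
        congr 1
        ring
      rw [this]
      ring
    simp only [hcomb]
    rw [integral_const_mul]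
    congr 1
    have := char_ball_int p χ hχ (-r) (ξ - w)
    rw [neg_neg] at this
    rw [hB]
    exact this
  rw [hres, hstep1, hswap]
  have houter : ∀ w : ℚ_[p], (∫ z in B, F (z, w) ∂(μp p))
      = Set.indicator T (fun w => psiC p r α t w * (((p:ℝ)^(-r) : ℝ) : ℂ)) w := by
    intro w
    by_cases h : w ∈ T
    · rw [Set.indicator_of_mem h, hinner w, if_pos (show ‖ξ - w‖ ≤ (p:ℝ)^r from h)]
    · rw [Set.indicator_of_notMem h, hinner w, if_neg (show ¬ ‖ξ - w‖ ≤ (p:ℝ)^r from h), mul_zero]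
  simp only [houter]
  rw [integral_indicator hTmeas]
  have hconst : ∀ w ∈ T, psiC p r α t w * (((p:ℝ)^(-r) : ℝ) : ℂ)
      = psiC p r α t ξ * (((p:ℝ)^(-r) : ℝ) : ℂ) := by
    intro w hw
    congr 1
    apply psiC_locConst
    rw [show w - ξ = -(ξ - w) by ring, norm_neg]
    exact hw
  rw [setIntegral_congr_fun hTmeas hconst, setIntegral_const, measureReal_def, hμT,
    ENNReal.toReal_ofReal (le_of_lt (zpow_pos (hp0 p) r))]
  have hcancel : ((((p:ℝ)^(-r) : ℝ):ℂ)) * (((p:ℝ)^r : ℝ):ℂ) = 1 := by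
    rw [← Complex.ofReal_mul, ← zpow_add₀ (ne_of_gt (hp0 p)),
      show -r + r = 0 by ring, zpow_zero]
    norm_num
  rw [Complex.real_smul]
  rw [show ((((p:ℝ)^r : ℝ)):ℂ) * (psiC p r α t ξ * (((p:ℝ)^(-r) : ℝ):ℂ))
      = psiC p r α t ξ * (((((p:ℝ)^(-r)) : ℝ):ℂ) * ((((p:ℝ)^r) : ℝ):ℂ)) by ring]
  rw [hcancel, mul_one]

lemma Bp_eq_closedBall (n : ℤ) : Bp p n = Metric.closedBall 0 ((p:ℝ)^n) := by
  ext x; simp [Bp, Metric.mem_closedBall, dist_zero_right]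

lemma Bp_compact (n : ℤ) : IsCompact (Bp p n) := by
  rw [Bp_eq_closedBall]; exact isCompact_closedBall 0 _

lemma phi_continuous (φ : ℚ_[p] → ℂ) {n : ℤ}
    (hn : ∀ x y : ℚ_[p], ‖x - y‖ ≤ (p:ℝ)^n → φ x = φ y) : Continuous φ := by
  rw [continuous_iff_continuousAt]
  intro x
  have h : ∀ᶠ y in 𝓝 x, φ y = φ x := by
    filter_upwards [Metric.closedBall_mem_nhds x (zpow_pos (hp0 p) n)] with y hy
    exact hn y x (by simpa [dist_eq_norm] using hy)
  exact (continuousAt_const (y := φ x)).congr (h.mono fun y hy => hy.symm)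

lemma phi_integrable (φ : ℚ_[p] → ℂ) (hcont : Continuous φ) {m : ℤ}
    (hm : ∀ x : ℚ_[p], (p:ℝ)^m < ‖x‖ → φ x = 0) : Integrable φ (μp p) := by
  apply hcont.integrable_of_hasCompactSupport
  apply HasCompactSupport.intro (Bp_compact p m)
  intro x hx
  apply hm
  by_contra hc
  push_neg at hc
  exact hx hc

lemma norm_sub_eq_of_lt {x y : ℚ_[p]} (h : ‖y‖ < ‖x‖) : ‖x - y‖ = ‖x‖ := by
  have h1 : ‖x - y‖ ≤ max ‖x‖ ‖y‖ := by
    calc ‖x - y‖ = ‖x + (-y)‖ := by ring_nf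
      _ ≤ max ‖x‖ ‖-y‖ := Padic.nonarchimedean _ _
      _ = max ‖x‖ ‖y‖ := by rw [norm_neg]
  have h2 : ‖x‖ ≤ max ‖x - y‖ ‖y‖ := by
    calc ‖x‖ = ‖(x - y) + y‖ := by ring_nf
      _ ≤ max ‖x - y‖ ‖y‖ := Padic.nonarchimedean _ _
  rcases max_cases ‖x - y‖ ‖y‖ with ⟨he, _⟩ | ⟨he, _⟩
  · rw [he] at h2
    exact le_antisymm (le_trans h1 (max_le le_rfl h.le)) h2
  · rw [he] at h2
    linarith

theorem stmt17 (χ : AddChar ℚ_[p] ℂ) (hχ : ∀ y : ℚ_[p], χ y = 1 ↔ ‖y‖ ≤ 1) (r : ℤ) (α : ℝ) (hα : 0 < α)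
    (φ : ℚ_[p] → ℂ)
    (hφconst : ∃ n : ℤ, ∀ x y : ℚ_[p], ‖x - y‖ ≤ (p:ℝ)^n → φ x = φ y)
    (hφsupp : ∃ m : ℤ, ∀ x : ℚ_[p], (p:ℝ)^m < ‖x‖ → φ x = 0) :
    ∀ t : ℝ, 0 ≤ t →
      ((∃ n : ℤ, ∀ x y : ℚ_[p], ‖x - y‖ ≤ (p:ℝ)^n →
          sol p χ r α φ t x = sol p χ r α φ t y) ∧
       (∃ m : ℤ, ∀ x : ℚ_[p], (p:ℝ)^m < ‖x‖ → sol p χ r α φ t x = 0) ∧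
       (∀ ξ : ℚ_[p], (∫ x, (χ (ξ*x) : ℂ) * sol p χ r α φ t x ∂(μp p))
          = Complex.exp (-((t * ((max ‖ξ‖ ((p:ℝ)^r)) ^ α - (p:ℝ)^((r:ℝ)*α)) : ℝ) : ℂ)) *
            ∫ x, (χ (ξ*x) : ℂ) * φ x ∂(μp p))) := by
  obtain ⟨n, hn⟩ := hφconst
  obtain ⟨m, hm⟩ := hφsupp
  intro t ht
  rcases eq_or_lt_of_le ht with ht0 | htpos
  · -- t = 0
    have ht0' : t = 0 := ht0.symm
    subst ht0'
    have hsol : sol p χ r α φ 0 = φ := by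
      funext x; rw [sol, if_pos rfl]
    rw [hsol]
    refine ⟨⟨n, hn⟩, ⟨m, hm⟩, ?_⟩
    intro ξ
    have : ((0:ℝ) * ((max ‖ξ‖ ((p:ℝ)^r)) ^ α - (p:ℝ)^((r:ℝ)*α)) : ℝ) = 0 := by ring
    rw [this]
    norm_num
  · -- t > 0
    have htne : t ≠ 0 := ne_of_gt htpos
    set Z : ℚ_[p] → ℂ := heatKernel' p χ r α t with hZdef
    have hKeq : heatKernel p χ r α t = Z := rfl
    have hsol : ∀ x, sol p χ r α φ t x = ∫ y, Z (x - y) * φ y ∂(μp p) := by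
      intro x
      rw [sol, if_neg htne, hKeq]
    have hφcont : Continuous φ := phi_continuous p φ hn
    have hφint : Integrable φ (μp p) := phi_integrable p φ hφcont hm
    have hZcont : Continuous Z := hK_continuous p χ r α t hχ hα htpos
    have hZsupp : ∀ z : ℚ_[p], (p:ℝ)^(-r) < ‖z‖ → Z z = 0 :=
      fun z hz => hK_supp p χ r α t hχ hz
    set M : ℤ := max m (-r) with hM
    have hvanish : ∀ x : ℚ_[p], (p:ℝ)^M < ‖x‖ → ∀ y : ℚ_[p], Z (x - y) * φ y = 0 := by
      intro x hx y
      by_cases hy : (p:ℝ)^m < ‖y‖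
      · rw [hm y hy, mul_zero]
      · push_neg at hy
        have hylt : ‖y‖ < ‖x‖ := by
          calc ‖y‖ ≤ (p:ℝ)^m := hy
            _ ≤ (p:ℝ)^M := zpow_le_zpow_right₀ (le_of_lt (hp1 p)) (le_max_left _ _)
            _ < ‖x‖ := hx
        have hnorm : ‖x - y‖ = ‖x‖ := norm_sub_eq_of_lt p hylt
        have : (p:ℝ)^(-r) < ‖x - y‖ := by
          rw [hnorm]
          calc (p:ℝ)^(-r) ≤ (p:ℝ)^M := zpow_le_zpow_right₀ (le_of_lt (hp1 p)) (le_max_right _ _)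
            _ < ‖x‖ := hx
        rw [hZsupp _ this, zero_mul]
    have hconv : ∀ x, sol p χ r α φ t x = ∫ y, Z y * φ (x - y) ∂(μp p) := by
      intro x
      rw [hsol x]
      have h := integral_sub_left_eq_self (fun y => Z y * φ (x - y)) (μp p) x
      rw [← h]
      congr 1
      funext y
      rw [show x - (x - y) = y by ring]
    refine ⟨⟨n, ?_⟩, ⟨M, ?_⟩, ?_⟩
    · -- locally constant
      intro x y hxy
      rw [hconv x, hconv y]
      congr 1
      funext z
      congr 1
      apply hn
      rw [show (x - z) - (y - z) = x - y by ring]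
      exact hxy
    · -- compact support
      intro x hx
      rw [hsol x]
      have h : (fun y => Z (x - y) * φ y) = fun _ => (0:ℂ) := by
        funext y
        exact hvanish x hx y
      rw [h, integral_zero]
    · -- Fourier transform
      intro ξ
      set G : ℚ_[p] × ℚ_[p] → ℂ := fun q => χ (ξ*q.1) * (Z (q.1 - q.2) * φ q.2) with hG
      have hGcont : Continuous G := by
        apply Continuous.mul
        · exact (char_continuous p χ hχ).comp (continuous_const.mul continuous_fst)
        · exact (hZcont.comp (continuous_fst.sub continuous_snd)).mul (hφcont.comp continuous_snd)
      have hGsupp : HasCompactSupport G := by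
        apply HasCompactSupport.intro ((Bp_compact p M).prod (Bp_compact p m))
        rintro ⟨x, y⟩ hxy
        have : Z (x - y) * φ y = 0 := by
          by_cases hy : (p:ℝ)^m < ‖y‖
          · rw [hm y hy, mul_zero]
          · push_neg at hy
            have hx : ¬ (‖x‖ ≤ (p:ℝ)^M) := by
              intro hc
              exact hxy ⟨hc, hy⟩
            push_neg at hx
            exact hvanish x hx y
        show χ (ξ*x) * (Z (x - y) * φ y) = 0
        rw [this, mul_zero]
      have hGint : Integrable G ((μp p).prod (μp p)) :=
        hGcont.integrable_of_hasCompactSupport hGsupp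
      have hlhs : ∫ x, (χ (ξ*x) : ℂ) * sol p χ r α φ t x ∂(μp p)
          = ∫ x, ∫ y, G (x, y) ∂(μp p) ∂(μp p) := by
        congr 1
        funext x
        rw [hsol x, ← integral_const_mul]
      have hswap : ∫ x, ∫ y, G (x, y) ∂(μp p) ∂(μp p)
          = ∫ y, ∫ x, G (x, y) ∂(μp p) ∂(μp p) := integral_integral_swap hGint
      have hFT := FT_hK p χ hχ (r := r) (t := t) hα htpos ξ
      have hinner : ∀ y : ℚ_[p], ∫ x, G (x, y) ∂(μp p)
          = psiC p r α t ξ * ((χ (ξ*y) : ℂ) * φ y) := by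
        intro y
        have hx1 : ∫ x, G (x, y) ∂(μp p) = φ y * ∫ x, χ (ξ*x) * Z (x - y) ∂(μp p) := by
          rw [← integral_const_mul]
          congr 1
          funext x
          show χ (ξ*x) * (Z (x - y) * φ y) = φ y * (χ (ξ*x) * Z (x - y))
          ring
        have hx2 : ∫ x, (χ (ξ*x) : ℂ) * Z (x - y) ∂(μp p)
            = ∫ z, (χ (ξ*(z+y)) : ℂ) * Z z ∂(μp p) := by
          rw [← integral_add_right_eq_self (fun x => (χ (ξ*x) : ℂ) * Z (x - y)) y]
          congr 1
          funext z
          rw [show z + y - y = z by ring]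
        have hx3 : ∫ z, (χ (ξ*(z+y)) : ℂ) * Z z ∂(μp p)
            = (χ (ξ*y) : ℂ) * ∫ z, (χ (ξ*z) : ℂ) * Z z ∂(μp p) := by
          rw [← integral_const_mul]
          congr 1
          funext z
          rw [show ξ*(z+y) = ξ*z + ξ*y by ring, AddChar.map_add_eq_mul]
          ring
        rw [hx1, hx2, hx3, hFT]
        ring
      have hfinal : ∫ y, psiC p r α t ξ * ((χ (ξ*y) : ℂ) * φ y) ∂(μp p)
          = psiC p r α t ξ * ∫ y, (χ (ξ*y) : ℂ) * φ y ∂(μp p) := integral_const_mul _ _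
      rw [hlhs, hswap]
      calc ∫ y, ∫ x, G (x, y) ∂(μp p) ∂(μp p)
          = ∫ y, psiC p r α t ξ * ((χ (ξ*y) : ℂ) * φ y) ∂(μp p) := by
            congr 1
            funext y
            exact hinner y
        _ = psiC p r α t ξ * ∫ y, (χ (ξ*y) : ℂ) * φ y ∂(μp p) := hfinal
end
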